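/- Let z, z₁, …, zₙ ∈ ℂ with |zᵢ| ≤ r < |z| for all i, let q₁, …, qₙ ∈ ℝ, set Q = Σᵢ |qᵢ|, c = |z|/r, and define the potential φ(z) = Σᵢ qᵢ log(z − zᵢ) (principal branch, valid since |zᵢ| < |z|). Then for every p ≥ 1, |φ(z) − q·log(z) + Σ_{k=1}^{p} (Σᵢ qᵢ zᵢᵏ/k) / zᵏ| ≤ (Q/(p+1)) · (1/(c−1)) · (1/c)^p, where q = Σᵢ qᵢ. -/

import Mathlib

open Complex Finset

/-- Tail bound for the log Taylor series: key per-point estimate. -/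
lemma log_tail_bound {w : ℂ} (hw : ‖w‖ < 1) (p : ℕ) :
    ‖Complex.log (1 - w) + ∑ k ∈ Finset.Icc 1 p, w ^ k / (k : ℂ)‖
      ≤ ‖w‖ ^ (p + 1) * (1 - ‖w‖)⁻¹ / (p + 1) := by
  have h := Complex.norm_log_one_sub_inv_add_logTaylor_neg_le p hw
  have hlog : Complex.log (1 - w)⁻¹ = -Complex.log (1 - w) :=
    Complex.log_inv _ <| Complex.slitPlane_arg_ne_pi <|
      Complex.mem_slitPlane_of_norm_lt_one <| (norm_neg w).symm ▸ hw
  have h0 : ∑ k ∈ Finset.Icc 1 p, w ^ k / (k : ℂ)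
      = ∑ k ∈ Finset.range (p + 1), w ^ k / (k : ℂ) := by
    rw [show Finset.range (p + 1) = insert 0 (Finset.Icc 1 p) by
      ext x; simp [Nat.lt_succ_iff, Nat.one_le_iff_ne_zero]; omega,
      Finset.sum_insert (by simp)]
    simp
  have hT : Complex.logTaylor (p + 1) (-w) = -∑ k ∈ Finset.Icc 1 p, w ^ k / (k : ℂ) := by
    rw [Complex.logTaylor, h0, ← Finset.sum_neg_distrib]
    refine Finset.sum_congr rfl fun j _ => ?_
    have hj : (-1 : ℂ) ^ (j + 1) * (-w) ^ j = -(w ^ j) := by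
      rw [neg_pow w j, ← mul_assoc, ← pow_add, show j + 1 + j = 2 * j + 1 by ring,
        pow_succ, pow_mul]
      norm_num
    rw [hj]; ring
  calc ‖Complex.log (1 - w) + ∑ k ∈ Finset.Icc 1 p, w ^ k / (k : ℂ)‖
      = ‖Complex.log (1 - w)⁻¹ + Complex.logTaylor (p + 1) (-w)‖ := by
        rw [hlog, hT, ← neg_add, norm_neg]
    _ ≤ ‖w‖ ^ (p + 1) * (1 - ‖w‖)⁻¹ / (p + 1) := h

/-- Multipole expansion error bound (Greengard–Rokhlin). -/
theorem multipole_expansion_bound (n : ℕ) (z : ℂ) (zs : Fin n → ℂ) (qs : Fin n → ℝ)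
    (r : ℝ) (hr0 : 0 < r) (hr : ∀ i, ‖zs i‖ ≤ r) (hz : r < ‖z‖)
    (hbranch : ∀ i, Complex.log (z - zs i) = Complex.log z + Complex.log (1 - zs i / z))
    (p : ℕ) (hp : 1 ≤ p) :
    ‖((∑ i, (qs i : ℂ) * Complex.log (z - zs i))
        - (∑ i, (qs i : ℂ)) * Complex.log z
        + ∑ k ∈ Finset.Icc 1 p, (∑ i, (qs i : ℂ) * (zs i) ^ k / (k : ℂ)) / z ^ k)‖
      ≤ ((∑ i, |qs i|) / (p + 1)) * (1 / (‖z‖ / r - 1))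
          * (1 / (‖z‖ / r)) ^ p := by
  have hz0 : (0:ℝ) < ‖z‖ := hr0.trans hz
  set t : ℝ := r / ‖z‖ with ht
  have ht1 : t < 1 := (div_lt_one hz0).mpr hz
  have ht0 : 0 < t := div_pos hr0 hz0
  have h1 : (0:ℝ) < 1 - t := by linarith
  have hswap : ∑ k ∈ Finset.Icc 1 p, (∑ i, (qs i : ℂ) * (zs i) ^ k / (k : ℂ)) / z ^ k
      = ∑ i, ∑ k ∈ Finset.Icc 1 p, (qs i : ℂ) * ((zs i / z) ^ k / (k : ℂ)) := by
    simp_rw [Finset.sum_div]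
    rw [Finset.sum_comm]
    refine Finset.sum_congr rfl fun i _ => Finset.sum_congr rfl fun k _ => ?_
    rw [div_pow]; ring
  have key : (∑ i, (qs i : ℂ) * Complex.log (z - zs i))
        - (∑ i, (qs i : ℂ)) * Complex.log z
        + ∑ k ∈ Finset.Icc 1 p, (∑ i, (qs i : ℂ) * (zs i) ^ k / (k : ℂ)) / z ^ k
      = ∑ i, (qs i : ℂ) *
          (Complex.log (1 - zs i / z) + ∑ k ∈ Finset.Icc 1 p, (zs i / z) ^ k / (k : ℂ)) := by
    rw [hswap, Finset.sum_mul, ← Finset.sum_sub_distrib, ← Finset.sum_add_distrib]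
    refine Finset.sum_congr rfl fun i _ => ?_
    rw [hbranch i, mul_add, mul_add, Finset.mul_sum]
    ring
  rw [key]
  calc ‖∑ i, (qs i : ℂ) *
          (Complex.log (1 - zs i / z) + ∑ k ∈ Finset.Icc 1 p, (zs i / z) ^ k / (k : ℂ))‖
      ≤ ∑ i, ‖(qs i : ℂ) *
          (Complex.log (1 - zs i / z) + ∑ k ∈ Finset.Icc 1 p, (zs i / z) ^ k / (k : ℂ))‖ :=
        norm_sum_le _ _
    _ ≤ ∑ i, |qs i| * (t ^ (p + 1) * (1 - t)⁻¹ / (p + 1)) := by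
        refine Finset.sum_le_sum fun i _ => ?_
        rw [norm_mul, Complex.norm_real, Real.norm_eq_abs]
        refine mul_le_mul_of_nonneg_left ?_ (abs_nonneg _)
        have hwi : ‖zs i / z‖ ≤ t := by
          rw [norm_div, ht]
          gcongr
          exact hr i
        have hwi1 : ‖zs i / z‖ < 1 := lt_of_le_of_lt hwi ht1
        refine (log_tail_bound hwi1 p).trans ?_
        gcongr
    _ = (∑ i, |qs i|) * (t ^ (p + 1) * (1 - t)⁻¹ / (p + 1)) := by
        rw [← Finset.sum_mul]
    _ = ((∑ i, |qs i|) / (p + 1)) * (1 / (‖z‖ / r - 1))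
          * (1 / (‖z‖ / r)) ^ p := by
        have hc1 : (0:ℝ) < ‖z‖ / r - 1 := by
          rw [sub_pos, lt_div_iff₀ hr0, one_mul]; exact hz
        have hp1 : (0:ℝ) < (p:ℝ) + 1 := by positivity
        have e1 : 1 / (‖z‖ / r - 1) = t / (1 - t) := by
          rw [ht]
          field_simp
        have e2 : 1 / (‖z‖ / r) = t := by rw [ht, one_div, inv_div]
        rw [e1, e2, pow_succ]
        ring
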